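/- Let C be a smooth projective curve, F a rank-2 vector bundle on C given as an extension 0 → B → F → B' → 0 of line bundles with B globally generated. Let W̄ := Im(H⁰(C,F) → H⁰(C,B')). If the multiplication map μ : H⁰(C,B) ⊗ W̄ → H⁰(C, det F) is injective, then the subspace H⁰(C,B) ⊆ H⁰(C,F) is strongly isotropic: the kernel K^⊥ of the determinant map d : ⋀²H⁰(C,F) → H⁰(C, det F) satisfies K^⊥ ∩ ⟨H⁰(C,B)⟩_E = ⋀²H⁰(C,B), where ⟨·⟩_E denotes the ideal generated in the exterior algebra ⋀H⁰(C,F). -/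
import Mathlib


open scoped TensorProduct

noncomputable section

namespace StronglyIsotropic

variable (V₀ : Type) [AddCommGroup V₀] [Module ℂ V₀]

/-- The two-sided ideal `⟨U⟩_E` generated by a subspace `U ⊆ V₀` in the exterior algebra
`⋀ V₀`, as a submodule. -/
def idealSpan (U : Submodule ℂ V₀) : Submodule ℂ (ExteriorAlgebra ℂ V₀) :=
  Submodule.span ℂ {z | ∃ x y : ExteriorAlgebra ℂ V₀, ∃ u ∈ U,
    z = x * ExteriorAlgebra.ι ℂ u * y}

/-- The subspace `⋀² U ⊆ ⋀ V₀` spanned by wedges of two elements of `U`. -/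
def wedgeSquare (U : Submodule ℂ V₀) : Submodule ℂ (ExteriorAlgebra ℂ V₀) :=
  Submodule.span ℂ {z | ∃ u ∈ U, ∃ v ∈ U, z = ExteriorAlgebra.ι ℂ u * ExteriorAlgebra.ι ℂ v}

/-- (Strong isotropy criterion; linear-algebra model of the geometric
setting `0 → B → F → B' → 0` of line bundles on a smooth projective curve `C`, with
`V₀ = H⁰(C,F)`, `U = H⁰(C,B)` — the kernel of the restriction map `r` to
`W̄ = Im(H⁰(C,F) → H⁰(C,B'))` — `d` the determinant map `⋀²H⁰(C,F) → H⁰(C, det F)` and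
`μ : H⁰(C,B) ⊗ W̄ → H⁰(C, det F)` the multiplication map, satisfying the key identity
`μ(a ⊗ r(b)) = d(a ∧ b)`.) If `μ` is injective, then `U` is strongly isotropic:
`K^⊥ ∩ ⟨U⟩_E = ⋀² U`, where `K^⊥ = ker d ∩ ⋀² V₀`. -/
theorem stronglyIsotropic_of_injective_mul
    (T W' : Type) [AddCommGroup T] [Module ℂ T] [AddCommGroup W'] [Module ℂ W']
    (U : Submodule ℂ V₀)
    (r : V₀ →ₗ[ℂ] W') (hr : Function.Surjective r) (hker : LinearMap.ker r = U)
    (d : ExteriorAlgebra ℂ V₀ →ₗ[ℂ] T)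
    (hiso : ∀ u ∈ U, ∀ v ∈ U, d (ExteriorAlgebra.ι ℂ u * ExteriorAlgebra.ι ℂ v) = 0)
    (μ : (↥U ⊗[ℂ] W') →ₗ[ℂ] T)
    (hcompat : ∀ (u : ↥U) (v : V₀),
      μ (u ⊗ₜ[ℂ] r v) = d (ExteriorAlgebra.ι ℂ (u : V₀) * ExteriorAlgebra.ι ℂ v))
    (hμ : Function.Injective μ) :
    LinearMap.ker d ⊓ idealSpan V₀ U ⊓ ⋀[ℂ]^2 V₀ = wedgeSquare V₀ U := by
  -- d vanishes on wedgeSquare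
  have hdw : ∀ z ∈ wedgeSquare V₀ U, d z = 0 := by
    intro z hz
    induction hz using Submodule.span_induction with
    | mem z hz => obtain ⟨u, hu, v, hv, rfl⟩ := hz; exact hiso u hu v hv
    | zero => simp
    | add x y _ _ hx hy => simp [hx, hy]
    | smul c x _ hx => simp [hx]
  -- a right inverse of r
  obtain ⟨s, hs⟩ := r.exists_rightInverse_of_surjective (LinearMap.range_eq_top.2 hr)
  have hrs : ∀ w, r (s w) = w := fun w => congrFun (congrArg DFunLike.coe hs) w
  apply le_antisymm
  · -- hard direction
    rintro z ⟨⟨hzd, hzI⟩, hz2⟩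
    -- F kills the ideal
    set f : V₀ →ₗ[ℂ] V₀ := s ∘ₗ r with hf
    have hfU : ∀ u ∈ U, f u = 0 := by
      intro u hu
      have : r u = 0 := by rw [← hker] at hu; exact hu
      simp [hf, this]
    set F := ExteriorAlgebra.map f with hF
    have hFI0 : ∀ w ∈ idealSpan V₀ U, F w = 0 := by
      intro w hw
      induction hw using Submodule.span_induction with
      | mem w hwm =>
        obtain ⟨x, y, u, hu, rfl⟩ := hwm
        simp [hF, map_mul, ExteriorAlgebra.map_apply_ι, hfU u hu]
      | zero => simp
      | add x y _ _ hx hy => simp [map_add, hx, hy]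
      | smul c x _ hx => simp [map_smul, hx]
    have hFI : F z = 0 := hFI0 z hzI
    -- z - F z ∈ span of U ∧ V₀; since F z = 0, z itself is
    set UwV : Submodule ℂ (ExteriorAlgebra ℂ V₀) :=
      Submodule.span ℂ {z | ∃ u ∈ U, ∃ v : V₀, z = ExteriorAlgebra.ι ℂ u * ExteriorAlgebra.ι ℂ v}
      with hUwV
    have hsub0 : ∀ w ∈ (⋀[ℂ]^2 V₀ : Submodule ℂ (ExteriorAlgebra ℂ V₀)), w - F w ∈ UwV := by
      intro w hw
      rw [show (⋀[ℂ]^2 V₀ : Submodule ℂ (ExteriorAlgebra ℂ V₀))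
        = LinearMap.range (ExteriorAlgebra.ι ℂ : V₀ →ₗ[ℂ] ExteriorAlgebra ℂ V₀)
          * LinearMap.range (ExteriorAlgebra.ι ℂ) from pow_two _] at hw
      refine Submodule.mul_induction_on hw (fun m hm n hn => ?_) (fun x y hx hy => ?_)
      · obtain ⟨a, rfl⟩ := hm
        obtain ⟨b, rfl⟩ := hn
        have key : ExteriorAlgebra.ι ℂ a * ExteriorAlgebra.ι ℂ b
            - F (ExteriorAlgebra.ι ℂ a * ExteriorAlgebra.ι ℂ b)
            = ExteriorAlgebra.ι ℂ (a - f a) * ExteriorAlgebra.ι ℂ b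
              + (-1 : ℂ) • (ExteriorAlgebra.ι ℂ (b - f b) * ExteriorAlgebra.ι ℂ (f a)) := by
          have hswap := ExteriorAlgebra.ι_add_mul_swap (R := ℂ) (f a) (b - f b)
          have hanti : ExteriorAlgebra.ι ℂ (f a) * ExteriorAlgebra.ι ℂ (b - f b)
              = - (ExteriorAlgebra.ι ℂ (b - f b) * ExteriorAlgebra.ι ℂ (f a)) :=
            eq_neg_of_add_eq_zero_left hswap
          simp only [hF, map_mul, ExteriorAlgebra.map_apply_ι, neg_one_smul]
          rw [← hanti, map_sub, map_sub]
          noncomm_ring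
        rw [key]
        have haU : a - f a ∈ U := by
          rw [← hker]; simp [hf, hrs]
        have hbU : b - f b ∈ U := by
          rw [← hker]; simp [hf, hrs]
        exact Submodule.add_mem _
          (Submodule.subset_span ⟨_, haU, b, rfl⟩)
          (Submodule.smul_mem _ _ (Submodule.subset_span ⟨_, hbU, f a, rfl⟩))
      · have : x + y - F (x + y) = (x - F x) + (y - F y) := by rw [map_add]; abel
        rw [this]; exact Submodule.add_mem _ hx hy
    have hsub := hsub0 z hz2
    rw [hFI, sub_zero] at hsub
    -- now realize z as ψ t for t ∈ U ⊗ V₀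
    set ψ : (↥U ⊗[ℂ] V₀) →ₗ[ℂ] ExteriorAlgebra ℂ V₀ :=
      TensorProduct.lift ((LinearMap.mul ℂ (ExteriorAlgebra ℂ V₀)).compl₁₂
        ((ExteriorAlgebra.ι ℂ) ∘ₗ U.subtype) (ExteriorAlgebra.ι ℂ)) with hψ
    have hψtm : ∀ (u : ↥U) (v : V₀), ψ (u ⊗ₜ v)
        = ExteriorAlgebra.ι ℂ (u : V₀) * ExteriorAlgebra.ι ℂ v := fun u v => rfl
    have hrange : UwV ≤ LinearMap.range ψ := by
      rw [hUwV, Submodule.span_le]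
      rintro _ ⟨u, hu, v, rfl⟩
      exact ⟨(⟨u, hu⟩ : ↥U) ⊗ₜ v, rfl⟩
    obtain ⟨t, ht⟩ := hrange hsub
    -- decompose ψ
    set α : (↥U ⊗[ℂ] V₀) →ₗ[ℂ] ExteriorAlgebra ℂ V₀ :=
      TensorProduct.lift ((LinearMap.mul ℂ (ExteriorAlgebra ℂ V₀)).compl₁₂
        ((ExteriorAlgebra.ι ℂ) ∘ₗ U.subtype)
        ((ExteriorAlgebra.ι ℂ) ∘ₗ (LinearMap.id - s ∘ₗ r))) with hα
    set ψ₂ : (↥U ⊗[ℂ] W') →ₗ[ℂ] ExteriorAlgebra ℂ V₀ :=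
      TensorProduct.lift ((LinearMap.mul ℂ (ExteriorAlgebra ℂ V₀)).compl₁₂
        ((ExteriorAlgebra.ι ℂ) ∘ₗ U.subtype) ((ExteriorAlgebra.ι ℂ) ∘ₗ s)) with hψ₂
    set β : (↥U ⊗[ℂ] V₀) →ₗ[ℂ] (↥U ⊗[ℂ] W') := TensorProduct.map LinearMap.id r with hβ
    have hdec : ψ = α + ψ₂ ∘ₗ β := by
      apply TensorProduct.ext'
      intro u v
      show ExteriorAlgebra.ι ℂ (u : V₀) * ExteriorAlgebra.ι ℂ v
        = ExteriorAlgebra.ι ℂ (u : V₀) * ExteriorAlgebra.ι ℂ (v - s (r v))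
          + ExteriorAlgebra.ι ℂ (u : V₀) * ExteriorAlgebra.ι ℂ (s (r v))
      rw [map_sub, mul_sub]; abel
    have hαw : ∀ t', α t' ∈ wedgeSquare V₀ U := by
      intro t'
      induction t' using TensorProduct.induction_on with
      | zero => simp [wedgeSquare]
      | tmul u v =>
        refine Submodule.subset_span ⟨(u : V₀), u.2, v - s (r v), ?_, rfl⟩
        rw [← hker]; simp [hrs]
      | add x y hx hy => rw [map_add]; exact Submodule.add_mem _ hx hy
    have hdψ₂ : d ∘ₗ ψ₂ = μ := by
      apply TensorProduct.ext'
      intro u w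
      show d (ExteriorAlgebra.ι ℂ (u : V₀) * ExteriorAlgebra.ι ℂ (s w)) = μ (u ⊗ₜ w)
      rw [← hcompat u (s w), hrs]
    have hβ0 : β t = 0 := by
      apply hμ
      have hdz : d z = 0 := hzd
      have : d (ψ t) = 0 := by rw [ht]; exact hdz
      rw [hdec] at this
      simp only [LinearMap.add_apply, LinearMap.comp_apply, map_add] at this
      rw [hdw _ (hαw t), zero_add] at this
      rw [map_zero]
      calc μ (β t) = (d ∘ₗ ψ₂) (β t) := by rw [hdψ₂]
        _ = 0 := this
    have : z = α t := by
      rw [← ht, hdec]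
      simp [hβ0]
    rw [this]; exact hαw t
  · -- easy direction
    rw [wedgeSquare, Submodule.span_le]
    rintro _ ⟨u, hu, v, hv, rfl⟩
    refine ⟨⟨hiso u hu v hv, Submodule.subset_span ⟨1, ExteriorAlgebra.ι ℂ v, u, hu, by rw [one_mul]⟩⟩, ?_⟩
    rw [show (⋀[ℂ]^2 V₀ : Submodule ℂ (ExteriorAlgebra ℂ V₀))
      = LinearMap.range (ExteriorAlgebra.ι ℂ : V₀ →ₗ[ℂ] ExteriorAlgebra ℂ V₀)
        * LinearMap.range (ExteriorAlgebra.ι ℂ) from pow_two _]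
    exact Submodule.mul_mem_mul ⟨u, rfl⟩ ⟨v, rfl⟩


end StronglyIsotropic
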